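/- Suppose conditions (C1)–(C3) hold and g : ℝ → ℝ^m is unpredictable. Then the unique bounded solution φ of x'(t) = A x(t) + f(x(t-τ)) + g(t) has the property that ‖φ(t + t_n) - φ(t)‖ → 0 as n → ∞ uniformly on every compact subset [α, β] of ℝ, where {t_n} is the sequence from the unpredictability of g. -/

import Mathlib

open MeasureTheory Filter Set Topology

private lemma exp_mul_intervalIntegral (ω a b : ℝ) (hω : 0 < ω) :
    ∫ x in a..b, Real.exp (ω * x) = Real.exp (ω * b) / ω - Real.exp (ω * a) / ω := by
  have hd : ∀ x : ℝ, HasDerivAt (fun y => Real.exp (ω * y) / ω) (Real.exp (ω * x)) x := by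
    intro x
    have h1 : HasDerivAt (fun y : ℝ => ω * y) ω x := by
      simpa using (hasDerivAt_id x).const_mul ω
    have h2 := (Real.hasDerivAt_exp (ω * x)).comp x h1
    have h3 := h2.div_const ω
    rwa [mul_div_assoc, div_self hω.ne', mul_one] at h3
  exact intervalIntegral.integral_eq_sub_of_hasDerivAt (fun x _ => hd x)
    ((Real.continuous_exp.comp (continuous_const.mul continuous_id)).intervalIntegrable a b)

private lemma exp_mul_integrableOn (ω c : ℝ) (hω : 0 < ω) :
    IntegrableOn (fun s : ℝ => Real.exp (ω * s)) (Set.Iic c) := by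
  refine integrableOn_Iic_of_intervalIntegral_norm_bounded (μ := volume) (l := atTop)
    (a := fun n : ℕ => -(n : ℝ)) (Real.exp (ω * c) / ω) c (fun n => ?_) ?_ ?_
  · exact (Real.continuous_exp.comp (continuous_const.mul continuous_id)).integrableOn_Ioc
  · exact tendsto_neg_atTop_atBot.comp tendsto_natCast_atTop_atTop
  · have hev : ∀ᶠ n : ℕ in atTop, (-(n : ℝ)) ≤ c := by
      filter_upwards [eventually_ge_atTop ⌈-c⌉₊] with n hn
      have h1 : -c ≤ (⌈-c⌉₊ : ℝ) := Nat.le_ceil _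
      have h2 : ((⌈-c⌉₊ : ℕ) : ℝ) ≤ (n : ℝ) := Nat.cast_le.mpr hn
      linarith
    filter_upwards [hev] with n hn
    have : ∫ x in (-(n:ℝ))..c, ‖Real.exp (ω * x)‖ = ∫ x in (-(n:ℝ))..c, Real.exp (ω * x) := by
      congr 1
      funext x
      exact Real.norm_of_nonneg (Real.exp_pos _).le
    rw [this, exp_mul_intervalIntegral ω _ _ hω]
    have h1 : 0 ≤ Real.exp (ω * (-(n:ℝ))) / ω := by positivity
    linarith

private lemma exp_mul_integral (ω c : ℝ) (hω : 0 < ω) :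
    ∫ s in Set.Iic c, Real.exp (ω * s) = Real.exp (ω * c) / ω := by
  have hd : ∀ x ∈ Set.Iic c, HasDerivAt (fun y => Real.exp (ω * y) / ω) (Real.exp (ω * x)) x := by
    intro x _
    have h1 : HasDerivAt (fun y : ℝ => ω * y) ω x := by
      simpa using (hasDerivAt_id x).const_mul ω
    have h2 := (Real.hasDerivAt_exp (ω * x)).comp x h1
    have h3 := h2.div_const ω
    rwa [mul_div_assoc, div_self hω.ne', mul_one] at h3
  have hlim : Tendsto (fun y => Real.exp (ω * y) / ω) atBot (𝓝 0) := by
    have h1 : Tendsto (fun y : ℝ => ω * y) atBot atBot := by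
      exact Tendsto.const_mul_atBot hω tendsto_id
    have h2 : Tendsto (fun y => Real.exp (ω * y)) atBot (𝓝 0) :=
      Real.tendsto_exp_atBot.comp h1
    simpa using h2.div_const ω
  have := integral_Iic_of_hasDerivAt_of_tendsto' hd (exp_mul_integrableOn ω c hω) hlim
  rw [this]; ring

private lemma ker_eq (ω t : ℝ) :
    (fun s : ℝ => Real.exp (-ω * (t - s))) = fun s => Real.exp (-ω * t) * Real.exp (ω * s) := by
  funext s
  rw [← Real.exp_add]
  congr 1
  ring

private lemma ker_integrableOn (ω t c : ℝ) (hω : 0 < ω) :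
    IntegrableOn (fun s : ℝ => Real.exp (-ω * (t - s))) (Set.Iic c) := by
  rw [ker_eq]
  exact (exp_mul_integrableOn ω c hω).const_mul _

private lemma ker_integral (ω t c : ℝ) (hω : 0 < ω) :
    ∫ s in Set.Iic c, Real.exp (-ω * (t - s)) = Real.exp (-ω * (t - c)) / ω := by
  rw [ker_eq, MeasureTheory.integral_const_mul, exp_mul_integral ω c hω,
    mul_div_assoc', ← Real.exp_add]
  congr 2
  ring

private lemma ker_mul_integrableOn (K ω t c : ℝ) (hω : 0 < ω) (hK : 0 ≤ K)
    (v : ℝ → ℝ) (hv : Continuous v) (M : ℝ) (hM : ∀ s, |v s| ≤ M) :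
    IntegrableOn (fun s : ℝ => K * Real.exp (-ω * (t - s)) * v s) (Set.Iic c) := by
  apply Integrable.mono' ((ker_integrableOn ω t c hω).const_mul (K * M))
  · exact ((continuous_const.mul (Real.continuous_exp.comp
      (continuous_const.mul (continuous_const.sub continuous_id)))).mul hv).aestronglyMeasurable
  · filter_upwards with s
    have he : (0:ℝ) < Real.exp (-ω * (t - s)) := Real.exp_pos _
    rw [Real.norm_eq_abs, abs_mul, abs_mul, abs_of_nonneg hK, abs_of_pos he]
    have := mul_le_mul_of_nonneg_left (hM s) (mul_nonneg hK he.le)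
    nlinarith [abs_nonneg (v s)]

private lemma ker_op_integrableOn {m : ℕ}
    (A : EuclideanSpace ℝ (Fin m) →L[ℝ] EuclideanSpace ℝ (Fin m)) (K ω : ℝ) (hω : 0 < ω)
    (hA : ∀ t : ℝ, 0 ≤ t → ‖NormedSpace.exp (t • A)‖ ≤ K * Real.exp (-ω * t))
    (u : ℝ → EuclideanSpace ℝ (Fin m)) (hu : Continuous u) (M : ℝ)
    (hM : ∀ s, ‖u s‖ ≤ M) (t : ℝ) :
    IntegrableOn (fun s => NormedSpace.exp ((t - s) • A) (u s)) (Set.Iic t) := by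
  apply Integrable.mono' ((ker_integrableOn ω t t hω).const_mul (K * M))
  · have h1 : Continuous fun s : ℝ => NormedSpace.exp ((t - s) • A) :=
      (continuous_iff_continuousAt.2 fun x =>
        (NormedSpace.exp_analytic (𝕂 := ℝ) x).continuousAt).comp ((continuous_const.sub continuous_id).smul continuous_const)
    exact (h1.clm_apply hu).aestronglyMeasurable
  · filter_upwards [self_mem_ae_restrict measurableSet_Iic] with s hs
    have h0 : (0:ℝ) ≤ t - s := sub_nonneg.2 hs
    calc ‖NormedSpace.exp ((t - s) • A) (u s)‖
        ≤ ‖NormedSpace.exp ((t - s) • A)‖ * ‖u s‖ := ContinuousLinearMap.le_opNorm _ _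
      _ ≤ (K * Real.exp (-ω * (t - s))) * M := by
          exact mul_le_mul (hA _ h0) (hM s) (norm_nonneg _)
            ((norm_nonneg _).trans (hA _ h0))
      _ = K * M * Real.exp (-ω * (t - s)) := by ring

set_option maxHeartbeats 1000000 in
/-- Under (C1)-(C3), if `g` is unpredictable with convergence sequence `{t_n}`, then the
bounded solution `φ` of `x' = Ax + f(x(t-τ)) + g(t)` satisfies
`‖φ(t + t_n) - φ(t)‖ → 0` uniformly on every compact interval `[α, β]`. -/
theorem unpredictable_stmt10 {m : ℕ}
    (A : EuclideanSpace ℝ (Fin m) →L[ℝ] EuclideanSpace ℝ (Fin m))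
    (f : EuclideanSpace ℝ (Fin m) → EuclideanSpace ℝ (Fin m))
    (g : ℝ → EuclideanSpace ℝ (Fin m))
    (Mf Lf Mg K ω τ : ℝ)
    (hMf : ∀ x, ‖f x‖ ≤ Mf)
    (hLf : ∀ x y, ‖f x - f y‖ ≤ Lf * ‖x - y‖)
    (hK : 1 ≤ K) (hω : 0 < ω) (hτ : 0 < τ)
    (hC3 : 0 < ω - 2 * K * Lf * Real.exp (ω * τ / 2))
    (hA : ∀ t : ℝ, 0 ≤ t → ‖NormedSpace.exp (t • A)‖ ≤ K * Real.exp (-ω * t))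
    -- g is unpredictable with sequences {t_n}, {u_n}
    (hgu : UniformContinuous g) (hMg : ∀ t, ‖g t‖ ≤ Mg)
    (ε₀ δ : ℝ) (hε₀ : 0 < ε₀) (hδ : 0 < δ) (tseq useq : ℕ → ℝ)
    (htseq : Tendsto tseq atTop atTop) (huseq : Tendsto useq atTop atTop)
    (hconv : ∀ α β : ℝ, ∀ ε > (0:ℝ), ∃ N : ℕ, ∀ n ≥ N, ∀ t ∈ Set.Icc α β,
      ‖g (t + tseq n) - g t‖ < ε)
    (hsep : ∀ n : ℕ, ∀ t ∈ Set.Icc (useq n - δ) (useq n + δ),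
      ε₀ ≤ ‖g (t + tseq n) - g t‖)
    -- φ is the bounded solution
    (φ : ℝ → EuclideanSpace ℝ (Fin m)) (hφc : Continuous φ) (hφb : ∃ C, ∀ t, ‖φ t‖ ≤ C)
    (hφ : ∀ t, φ t = ∫ s in Set.Iic t,
      NormedSpace.exp ((t - s) • A) (f (φ (s - τ)) + g s)) :
    ∀ α β : ℝ, ∀ ε > (0:ℝ), ∃ N : ℕ, ∀ n ≥ N, ∀ t ∈ Set.Icc α β,
      ‖φ (t + tseq n) - φ t‖ < ε := by
  intro α β ε hε
  obtain ⟨C₀, hC₀⟩ := hφb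
  set C : ℝ := max C₀ 0 with hCdef
  have hC : ∀ t, ‖φ t‖ ≤ C := fun t => (hC₀ t).trans (le_max_left _ _)
  have hC0 : (0:ℝ) ≤ C := le_max_right _ _
  set L : ℝ := max Lf 0 with hLdef
  have hL0 : (0:ℝ) ≤ L := le_max_right _ _
  have hLf' : ∀ x y, ‖f x - f y‖ ≤ L * ‖x - y‖ := fun x y =>
    (hLf x y).trans (mul_le_mul_of_nonneg_right (le_max_left _ _) (norm_nonneg _))
  have hMg0 : (0:ℝ) ≤ Mg := (norm_nonneg _).trans (hMg 0)
  have hMf0 : (0:ℝ) ≤ Mf := (norm_nonneg _).trans (hMf 0)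
  have hK0 : (0:ℝ) < K := lt_of_lt_of_le one_pos hK
  have hKL : 2 * K * L < ω := by
    rcases le_or_gt 0 Lf with h | h
    · have hL : L = Lf := max_eq_left h
      have he : (1:ℝ) ≤ Real.exp (ω * τ / 2) := Real.one_le_exp (by positivity)
      have h2 : (0:ℝ) ≤ 2 * K * Lf := by positivity
      nlinarith
    · have hL : L = 0 := max_eq_right h.le
      rw [hL]
      nlinarith
  by_cases hαβ : β < α
  · exact ⟨0, fun n _ t ht => absurd (ht.1.trans ht.2) (by linarith)⟩
  push_neg at hαβ
  have hfc : Continuous f := by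
    have hl : LipschitzWith (Real.toNNReal L) f := by
      apply LipschitzWith.of_dist_le_mul
      intro x y
      rw [dist_eq_norm, dist_eq_norm, Real.coe_toNNReal _ hL0]
      exact hLf' x y
    exact hl.continuous
  have hgc : Continuous g := hgu.continuous
  -- integrability of the shifted integrand
  have hint : ∀ θ t : ℝ, IntegrableOn
      (fun s => NormedSpace.exp ((t - s) • A) (f (φ (s + θ - τ)) + g (s + θ)))
      (Set.Iic t) := by
    intro θ t
    refine ker_op_integrableOn A K ω hω hA _ ?_ (Mf + Mg) ?_ t
    · exact (hfc.comp (hφc.comp ((continuous_id.add continuous_const).sub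
        continuous_const))).add (hgc.comp (continuous_id.add continuous_const))
    · intro s; exact (norm_add_le _ _).trans (add_le_add (hMf _) (hMg _))
  have hint0 : ∀ t : ℝ, IntegrableOn
      (fun s => NormedSpace.exp ((t - s) • A) (f (φ (s - τ)) + g s)) (Set.Iic t) := by
    intro t
    refine ker_op_integrableOn A K ω hω hA _ ?_ (Mf + Mg) ?_ t
    · exact (hfc.comp (hφc.comp (continuous_id.sub continuous_const))).add hgc
    · intro s; exact (norm_add_le _ _).trans (add_le_add (hMf _) (hMg _))
  -- change of variables
  have hshift : ∀ θ t : ℝ, φ (t + θ) =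
      ∫ s in Set.Iic t, NormedSpace.exp ((t - s) • A) (f (φ (s + θ - τ)) + g (s + θ)) := by
    intro θ t
    rw [hφ (t + θ)]
    have hmp := (measurePreserving_add_right (volume : Measure ℝ) θ).setIntegral_preimage_emb
      (measurableEmbedding_addRight θ)
      (fun s => NormedSpace.exp ((t + θ - s) • A) (f (φ (s - τ)) + g s)) (Set.Iic (t + θ))
    rw [← hmp]
    have hpre : (· + θ) ⁻¹' Set.Iic (t + θ) = Set.Iic t := by
      rw [Set.preimage_add_const_Iic]
      congr 1
      ring
    rw [hpre]
    congr 1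
    funext s
    have h2 : t + θ - (s + θ) = t - s := by ring
    rw [h2]
  -- the basic norm estimate
  have hnorm : ∀ θ t : ℝ, ‖φ (t + θ) - φ t‖ ≤
      ∫ s in Set.Iic t, K * Real.exp (-ω * (t - s)) *
        (L * ‖φ (s + θ - τ) - φ (s - τ)‖ + ‖g (s + θ) - g s‖) := by
    intro θ t
    have h1 := hint θ t
    have h2 := hint0 t
    rw [hshift θ t, hφ t, ← integral_sub h1 h2]
    refine (norm_integral_le_integral_norm _).trans ?_
    refine setIntegral_mono_on ((h1.sub h2).norm) ?_ measurableSet_Iic ?_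
    · refine ker_mul_integrableOn K ω t t hω hK0.le _ ?_ (L * (2 * C) + 2 * Mg) ?_
      · exact ((continuous_const.mul ((hφc.comp ((continuous_id.add continuous_const).sub
          continuous_const)).sub
          (hφc.comp (continuous_id.sub continuous_const))).norm).add
          ((hgc.comp (continuous_id.add continuous_const)).sub hgc).norm)
      · intro s
        have hv0 : (0:ℝ) ≤ L * ‖φ (s + θ - τ) - φ (s - τ)‖ + ‖g (s + θ) - g s‖ := by positivity
        rw [abs_of_nonneg hv0]
        have hb1 : ‖φ (s + θ - τ) - φ (s - τ)‖ ≤ 2 * C := by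
          have := hC (s + θ - τ); have := hC (s - τ)
          calc ‖φ (s + θ - τ) - φ (s - τ)‖ ≤ ‖φ (s + θ - τ)‖ + ‖φ (s - τ)‖ := norm_sub_le _ _
            _ ≤ 2 * C := by linarith
        have hb2 : ‖g (s + θ) - g s‖ ≤ 2 * Mg := by
          have := hMg (s + θ); have := hMg s
          calc ‖g (s + θ) - g s‖ ≤ ‖g (s + θ)‖ + ‖g s‖ := norm_sub_le _ _
            _ ≤ 2 * Mg := by linarith
        have := mul_le_mul_of_nonneg_left hb1 hL0
        linarith
    · intro s hs
      have h0 : (0:ℝ) ≤ t - s := sub_nonneg.2 hs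
      have heq : NormedSpace.exp ((t - s) • A) (f (φ (s + θ - τ)) + g (s + θ)) -
          NormedSpace.exp ((t - s) • A) (f (φ (s - τ)) + g s) =
          NormedSpace.exp ((t - s) • A)
            ((f (φ (s + θ - τ)) - f (φ (s - τ))) + (g (s + θ) - g s)) := by
        rw [← map_sub]
        congr 1
        abel
      rw [heq]
      have hw : ‖(f (φ (s + θ - τ)) - f (φ (s - τ))) + (g (s + θ) - g s)‖ ≤
          L * ‖φ (s + θ - τ) - φ (s - τ)‖ + ‖g (s + θ) - g s‖ :=
        (norm_add_le _ _).trans (add_le_add (hLf' _ _) le_rfl)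
      calc ‖NormedSpace.exp ((t - s) • A)
            ((f (φ (s + θ - τ)) - f (φ (s - τ))) + (g (s + θ) - g s))‖
          ≤ ‖NormedSpace.exp ((t - s) • A)‖ *
            ‖(f (φ (s + θ - τ)) - f (φ (s - τ))) + (g (s + θ) - g s)‖ :=
            ContinuousLinearMap.le_opNorm _ _
        _ ≤ (K * Real.exp (-ω * (t - s))) *
            (L * ‖φ (s + θ - τ) - φ (s - τ)‖ + ‖g (s + θ) - g s‖) := by
            refine mul_le_mul (hA _ h0) hw (norm_nonneg _) ((norm_nonneg _).trans (hA _ h0))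
        _ = K * Real.exp (-ω * (t - s)) *
            (L * ‖φ (s + θ - τ) - φ (s - τ)‖ + ‖g (s + θ) - g s‖) := by ring
  -- the splitting estimate
  have est : ∀ θ t R bi ε' : ℝ, 0 ≤ R → 0 ≤ bi → 0 ≤ ε' →
      (∀ s ∈ Set.Ioc (t - R) t, ‖φ (s + θ - τ) - φ (s - τ)‖ ≤ bi) →
      (∀ s ∈ Set.Ioc (t - R) t, ‖g (s + θ) - g s‖ ≤ ε') →
      ‖φ (t + θ) - φ t‖ ≤
        K * (L * (2 * C) + 2 * Mg) * Real.exp (-ω * R) / ω + K * L * bi / ω + K * ε' / ω := by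
    intro θ t R bi ε' hR hbi hε' hd hg'
    have hvcont : Continuous fun s : ℝ =>
        L * ‖φ (s + θ - τ) - φ (s - τ)‖ + ‖g (s + θ) - g s‖ :=
      (continuous_const.mul ((hφc.comp ((continuous_id.add continuous_const).sub
        continuous_const)).sub
        (hφc.comp (continuous_id.sub continuous_const))).norm).add
        ((hgc.comp (continuous_id.add continuous_const)).sub hgc).norm
    have hvb : ∀ s : ℝ, |L * ‖φ (s + θ - τ) - φ (s - τ)‖ + ‖g (s + θ) - g s‖| ≤
        L * (2 * C) + 2 * Mg := by
      intro s
      have hv0 : (0:ℝ) ≤ L * ‖φ (s + θ - τ) - φ (s - τ)‖ + ‖g (s + θ) - g s‖ := by positivity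
      rw [abs_of_nonneg hv0]
      have hb1 : ‖φ (s + θ - τ) - φ (s - τ)‖ ≤ 2 * C := by
        have := hC (s + θ - τ); have := hC (s - τ)
        calc ‖φ (s + θ - τ) - φ (s - τ)‖ ≤ ‖φ (s + θ - τ)‖ + ‖φ (s - τ)‖ := norm_sub_le _ _
          _ ≤ 2 * C := by linarith
      have hb2 : ‖g (s + θ) - g s‖ ≤ 2 * Mg := by
        have := hMg (s + θ); have := hMg s
        calc ‖g (s + θ) - g s‖ ≤ ‖g (s + θ)‖ + ‖g s‖ := norm_sub_le _ _
          _ ≤ 2 * Mg := by linarith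
      have := mul_le_mul_of_nonneg_left hb1 hL0
      linarith
    have hBint : IntegrableOn (fun s => K * Real.exp (-ω * (t - s)) *
        (L * ‖φ (s + θ - τ) - φ (s - τ)‖ + ‖g (s + θ) - g s‖)) (Set.Iic t) :=
      ker_mul_integrableOn K ω t t hω hK0.le _ hvcont _ hvb
    have hsub1 : Set.Iic (t - R) ⊆ Set.Iic t := Set.Iic_subset_Iic.2 (by linarith)
    have hsub2 : Set.Ioc (t - R) t ⊆ Set.Iic t := Set.Ioc_subset_Iic_self
    have hunion : Set.Iic (t - R) ∪ Set.Ioc (t - R) t = Set.Iic t :=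
      Set.Iic_union_Ioc_eq_Iic (by linarith)
    have hsplit : (∫ s in Set.Iic t, K * Real.exp (-ω * (t - s)) *
          (L * ‖φ (s + θ - τ) - φ (s - τ)‖ + ‖g (s + θ) - g s‖)) =
        (∫ s in Set.Iic (t - R), K * Real.exp (-ω * (t - s)) *
          (L * ‖φ (s + θ - τ) - φ (s - τ)‖ + ‖g (s + θ) - g s‖)) +
        (∫ s in Set.Ioc (t - R) t, K * Real.exp (-ω * (t - s)) *
          (L * ‖φ (s + θ - τ) - φ (s - τ)‖ + ‖g (s + θ) - g s‖)) := by
      rw [← setIntegral_union (Set.Iic_disjoint_Ioc le_rfl) measurableSet_Ioc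
        (hBint.mono_set hsub1) (hBint.mono_set hsub2), hunion]
    have hT1 : (∫ s in Set.Iic (t - R), K * Real.exp (-ω * (t - s)) *
          (L * ‖φ (s + θ - τ) - φ (s - τ)‖ + ‖g (s + θ) - g s‖)) ≤
        K * (L * (2 * C) + 2 * Mg) * Real.exp (-ω * R) / ω := by
      have hmono : (∫ s in Set.Iic (t - R), K * Real.exp (-ω * (t - s)) *
            (L * ‖φ (s + θ - τ) - φ (s - τ)‖ + ‖g (s + θ) - g s‖)) ≤
          ∫ s in Set.Iic (t - R), (K * (L * (2 * C) + 2 * Mg)) * Real.exp (-ω * (t - s)) := by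
        refine setIntegral_mono_on (hBint.mono_set hsub1)
          (((ker_integrableOn ω t (t - R) hω)).const_mul _) measurableSet_Iic ?_
        intro s _
        have he : (0:ℝ) < Real.exp (-ω * (t - s)) := Real.exp_pos _
        have := hvb s
        rw [abs_of_nonneg (by positivity)] at this
        have h4 : 0 ≤ K * Real.exp (-ω * (t - s)) *
            ((L * (2 * C) + 2 * Mg) - (L * ‖φ (s + θ - τ) - φ (s - τ)‖ + ‖g (s + θ) - g s‖)) :=
          mul_nonneg (mul_nonneg hK0.le he.le) (sub_nonneg.2 this)
        nlinarith [h4]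
      rw [MeasureTheory.integral_const_mul, ker_integral ω t (t - R) hω] at hmono
      have h3 : t - (t - R) = R := by ring
      rw [h3] at hmono
      calc _ ≤ K * (L * (2 * C) + 2 * Mg) * (Real.exp (-ω * R) / ω) := hmono
        _ = K * (L * (2 * C) + 2 * Mg) * Real.exp (-ω * R) / ω := by ring
    have hT2 : (∫ s in Set.Ioc (t - R) t, K * Real.exp (-ω * (t - s)) *
          (L * ‖φ (s + θ - τ) - φ (s - τ)‖ + ‖g (s + θ) - g s‖)) ≤
        K * L * bi / ω + K * ε' / ω := by
      have hmono : (∫ s in Set.Ioc (t - R) t, K * Real.exp (-ω * (t - s)) *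
            (L * ‖φ (s + θ - τ) - φ (s - τ)‖ + ‖g (s + θ) - g s‖)) ≤
          ∫ s in Set.Ioc (t - R) t, (K * (L * bi + ε')) * Real.exp (-ω * (t - s)) := by
        refine setIntegral_mono_on (hBint.mono_set hsub2)
          (((ker_integrableOn ω t t hω).mono_set hsub2).const_mul _) measurableSet_Ioc ?_
        intro s hs
        have he : (0:ℝ) < Real.exp (-ω * (t - s)) := Real.exp_pos _
        have h1 := hd s hs
        have h2 := hg' s hs
        have h3 := mul_le_mul_of_nonneg_left h1 hL0
        have h4 : 0 ≤ K * Real.exp (-ω * (t - s)) *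
            ((L * bi + ε') - (L * ‖φ (s + θ - τ) - φ (s - τ)‖ + ‖g (s + θ) - g s‖)) :=
          mul_nonneg (mul_nonneg hK0.le he.le) (sub_nonneg.2 (add_le_add h3 h2))
        nlinarith [h4]
      have hker : (∫ s in Set.Ioc (t - R) t, Real.exp (-ω * (t - s))) ≤ 1 / ω := by
        have hle : (∫ s in Set.Ioc (t - R) t, Real.exp (-ω * (t - s))) ≤
            ∫ s in Set.Iic t, Real.exp (-ω * (t - s)) := by
          refine setIntegral_mono_set (ker_integrableOn ω t t hω) ?_
            (HasSubset.Subset.eventuallyLE hsub2)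
          filter_upwards with s
          exact (Real.exp_pos _).le
        rw [ker_integral ω t t hω] at hle
        simpa using hle
      rw [MeasureTheory.integral_const_mul] at hmono
      have hc0 : (0:ℝ) ≤ K * (L * bi + ε') := by positivity
      calc (∫ s in Set.Ioc (t - R) t, K * Real.exp (-ω * (t - s)) *
            (L * ‖φ (s + θ - τ) - φ (s - τ)‖ + ‖g (s + θ) - g s‖))
          ≤ K * (L * bi + ε') * ∫ s in Set.Ioc (t - R) t, Real.exp (-ω * (t - s)) := hmono
        _ ≤ K * (L * bi + ε') * (1 / ω) := mul_le_mul_of_nonneg_left hker hc0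
        _ = K * L * bi / ω + K * ε' / ω := by ring
    calc ‖φ (t + θ) - φ t‖ ≤ _ := hnorm θ t
      _ ≤ _ := by rw [hsplit]; linarith [hT1, hT2]
  -- choose the parameters
  obtain ⟨k, hk⟩ : ∃ k : ℕ, (1 / 2 : ℝ) ^ k * (2 * C + 1) < ε / 2 := by
    have h1 : Tendsto (fun k : ℕ => (1 / 2 : ℝ) ^ k * (2 * C + 1)) atTop (𝓝 0) := by
      simpa using (tendsto_pow_atTop_nhds_zero_of_lt_one (by norm_num) (by norm_num :
        (1/2:ℝ) < 1)).mul_const (2 * C + 1)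
    exact (h1.eventually (gt_mem_nhds (show (0:ℝ) < ε / 2 by linarith))).exists
  obtain ⟨R, hR0, hRε⟩ : ∃ R : ℝ, 0 ≤ R ∧
      K * (L * (2 * C) + 2 * Mg) * Real.exp (-ω * R) / ω < ε / 8 := by
    have h1 : Tendsto (fun R : ℝ => K * (L * (2 * C) + 2 * Mg) * Real.exp (-ω * R) / ω)
        atTop (𝓝 0) := by
      have h2 : Tendsto (fun R : ℝ => -ω * R) atTop atBot := by
        have h3 : (fun R : ℝ => -ω * R) = (Neg.neg ∘ fun R : ℝ => ω * R) := by
          funext R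
          simp [Function.comp, neg_mul]
        rw [h3]
        exact tendsto_neg_atTop_atBot.comp (Tendsto.const_mul_atTop hω tendsto_id)
      have h5 : Tendsto (fun R : ℝ => Real.exp (-ω * R)) atTop (𝓝 0) :=
        Real.tendsto_exp_atBot.comp h2
      have h6 := (h5.const_mul (K * (L * (2 * C) + 2 * Mg))).div_const ω
      simpa using h6
    have h4 := (h1.eventually (gt_mem_nhds (show (0:ℝ) < ε / 8 by linarith)))
    obtain ⟨R, hR1, hR2⟩ := (h4.and (eventually_ge_atTop (0:ℝ))).exists
    exact ⟨R, hR2, hR1⟩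
  set ε' : ℝ := ε * ω / (8 * K) with hε'def
  have hε'0 : 0 < ε' := by positivity
  have hε'K : K * ε' / ω = ε / 8 := by
    have hKne : K ≠ 0 := ne_of_gt hK0
    have hωne : ω ≠ 0 := ne_of_gt hω
    rw [hε'def]
    field_simp
  obtain ⟨N, hN⟩ := hconv (α - (k : ℝ) * (R + τ) - R) β ε' hε'0
  -- the recursive bound
  set η : ℝ := K * (L * (2 * C) + 2 * Mg) * Real.exp (-ω * R) / ω + K * ε' / ω with hηdef
  have hη0 : 0 ≤ η := by positivity
  have hη4 : η < ε / 4 := by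
    rw [hηdef, hε'K]
    linarith
  set r : ℝ := K * L / ω with hrdef
  have hr0 : 0 ≤ r := by positivity
  have hr2 : r ≤ 1 / 2 := by
    rw [hrdef, div_le_iff₀ hω]
    nlinarith
  set b : ℕ → ℝ := fun i => Nat.rec (2 * C) (fun _ x => η + r * x) i with hbdef
  have hb0 : b 0 = 2 * C := rfl
  have hbS : ∀ i, b (i + 1) = η + r * b i := fun i => rfl
  have hbnn : ∀ i, 0 ≤ b i := by
    intro i
    induction i with
    | zero => rw [hb0]; linarith
    | succ i ih => rw [hbS]; positivity
  have hble : ∀ i, b i ≤ 2 * η + (1 / 2 : ℝ) ^ i * (2 * C + 1) := by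
    intro i
    induction i with
    | zero => rw [hb0]; norm_num; linarith
    | succ i ih =>
      rw [hbS]
      have h1 : r * b i ≤ (1 / 2) * b i := mul_le_mul_of_nonneg_right hr2 (hbnn i)
      have h2 : (1 / 2 : ℝ) * b i ≤ (1 / 2) * (2 * η + (1 / 2 : ℝ) ^ i * (2 * C + 1)) := by
        linarith [ih]
      have h3 : ((1:ℝ) / 2) ^ (i + 1) = (1 / 2) * (1 / 2 : ℝ) ^ i := by ring
      rw [h3]
      linarith
  -- main induction
  have main : ∀ i : ℕ, i ≤ k → ∀ n ≥ N, ∀ t : ℝ,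
      α - ((k : ℝ) - i) * (R + τ) ≤ t → t ≤ β → ‖φ (t + tseq n) - φ t‖ ≤ b i := by
    intro i
    induction i with
    | zero =>
      intro _ n _ t _ _
      rw [hb0]
      have := hC (t + tseq n); have := hC t
      calc ‖φ (t + tseq n) - φ t‖ ≤ ‖φ (t + tseq n)‖ + ‖φ t‖ := norm_sub_le _ _
        _ ≤ 2 * C := by linarith
    | succ i ih =>
      intro hik n hn t ht1 ht2
      have hik' : i ≤ k := Nat.le_of_succ_le hik
      have hikR : ((i : ℝ) + 1) ≤ (k : ℝ) := by exact_mod_cast hik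
      rw [hbS]
      refine (est (tseq n) t R (b i) ε' hR0 (hbnn i) hε'0.le ?_ ?_).trans ?_
      · intro s hs
        have hih := ih hik' n hn (s - τ) ?_ (by linarith [hs.2])
        · rwa [show s - τ + tseq n = s + tseq n - τ by ring] at hih
        have h1 : t - R < s := hs.1
        have h2 : Nat.cast (i + 1) = (i : ℝ) + 1 := by push_cast; ring
        rw [h2] at ht1
        have hRτ : (0:ℝ) ≤ R + τ := by linarith
        nlinarith [ht1, h1]
      · intro s hs
        refine (hN n hn s ⟨?_, hs.2.trans ?_⟩).le
        · have h2 : Nat.cast (i + 1) = (i : ℝ) + 1 := by push_cast; ring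
          rw [h2] at ht1
          have hk1 : ((k : ℝ) - ((i:ℝ) + 1)) ≤ (k : ℝ) := by linarith [Nat.cast_nonneg (α := ℝ) i]
          have hRτ : (0:ℝ) ≤ R + τ := by linarith
          have h3 : α - (k : ℝ) * (R + τ) ≤ α - ((k : ℝ) - ((i:ℝ) + 1)) * (R + τ) := by
            nlinarith [Nat.cast_nonneg (α := ℝ) i]
          linarith [hs.1]
        · linarith
      · rw [hηdef, hrdef]
        apply le_of_eq
        ring
  refine ⟨N, fun n hn t ht => ?_⟩
  have hfin := main k le_rfl n hn t (by
    have : ((k : ℝ) - (k : ℝ)) = 0 := by ring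
    rw [this]
    simpa using ht.1) ht.2
  have h1 := hble k
  calc ‖φ (t + tseq n) - φ t‖ ≤ b k := hfin
    _ ≤ 2 * η + (1 / 2 : ℝ) ^ k * (2 * C + 1) := h1
    _ < ε := by linarith
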